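/- Let R be an sQQR-domain which is not integrally closed, let x be an element of the integral closure of R not in R, and let 𝒫 be the set of primes of R not containing (R :_R x). Then the union of the primes in 𝒫 is exactly the set of nonunits of R. -/

import Mathlib

noncomputable section

/-- The image of `A` in `L` under the algebra map, as a set. -/
def imageR (A L : Type*) [CommRing A] [CommRing L] [Algebra A L] : Set L :=
  Set.range (algebraMap A L)

/-- The Kaplansky transform of an ideal `I` of `A`, computed inside `L`. -/
def omegaSet (A L : Type*) [CommRing A] [CommRing L] [Algebra A L] (I : Ideal A) : Set L :=
  {x : L | ∀ a ∈ I, ∃ n : ℕ, 1 ≤ n ∧ ∃ r : A, (algebraMap A L a) ^ n * x = algebraMap A L r}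

/-- The localization of `A` at the prime `P`, viewed as a subset of `L`. -/
def locSet (A L : Type*) [CommRing A] [CommRing L] [Algebra A L] (P : Ideal A) : Set L :=
  {x : L | ∃ s : A, s ∉ P ∧ ∃ r : A, x * algebraMap A L s = algebraMap A L r}

/-- The conductor ideal `(A :_A U) = {r : A | r • U ⊆ A}`. -/
def condIdeal (A L : Type*) [CommRing A] [CommRing L] [Algebra A L] (U : Set L) : Ideal A where
  carrier := {r : A | ∀ u ∈ U, ∃ r' : A, algebraMap A L r * u = algebraMap A L r'}
  zero_mem' := fun u _ => ⟨0, by simp⟩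
  add_mem' := by
    rintro a b ha hb u hu
    obtain ⟨a', ha'⟩ := ha u hu
    obtain ⟨b', hb'⟩ := hb u hu
    exact ⟨a' + b', by rw [map_add, map_add, add_mul, ha', hb']⟩
  smul_mem' := by
    rintro c r h u hu
    obtain ⟨r', hr'⟩ := h u hu
    exact ⟨c * r', by rw [smul_eq_mul, map_mul, map_mul, mul_assoc, hr']⟩

/-- A domain is an sQQR-domain if every simple overring `R[u]`, `u` in the quotient field,
is an intersection of localizations of `R` at primes. -/
def IsSQQR (A : Type*) [CommRing A] [IsDomain A] : Prop :=
  ∀ u : FractionRing A, ∃ Ps : Set (Ideal A), (∀ P ∈ Ps, P.IsPrime) ∧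
    (↑(Algebra.adjoin A {u} : Subalgebra A (FractionRing A)) : Set (FractionRing A)) =
      ⋂ P ∈ Ps, locSet A (FractionRing A) P

/-- A Prüfer domain: every localization at a prime is a valuation domain. -/
def IsPrufer (A : Type*) [CommRing A] [IsDomain A] : Prop :=
  ∀ (P : Ideal A) (hP : P.IsPrime),
    haveI := hP
    letI : IsDomain (Localization.AtPrime P) := IsLocalization.isDomain_of_local_atPrime hP
    ValuationRing (Localization.AtPrime P)


open Polynomial in
lemma isUnit_of_inv_isIntegral {R : Type*} [CommRing R] [IsDomain R] {r : R}
    (hr : algebraMap R (FractionRing R) r ≠ 0)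
    (hint : IsIntegral R ((algebraMap R (FractionRing R) r)⁻¹)) : IsUnit r := by
  set K := FractionRing R
  have hRS : Function.Injective (algebraMap R K) := IsFractionRing.injective R K
  set a_inv := (algebraMap R K r)⁻¹ with ha
  have ha_inv : algebraMap R K r * a_inv = 1 := mul_inv_cancel₀ hr
  letI : Invertible a_inv := (Units.mkOfMulEqOne a_inv _ <| mul_comm _ a_inv ▸ ha_inv).invertible
  obtain ⟨p, p_monic, hp⟩ := hint
  refine IsUnit.of_mul_eq_one (a := r) (-p.reverse.divX.eval r) ?_
  nth_rewrite 1 [mul_neg, ← eval_X (x := r), ← eval_mul, ← p_monic, ← coeff_zero_reverse,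
    ← add_eq_zero_iff_neg_eq, ← eval_C (a := p.reverse.coeff 0), ← eval_add, X_mul_divX_add,
    ← (injective_iff_map_eq_zero' _).mp hRS, ← aeval_algebraMap_apply_eq_algebraMap_eval]
  rwa [← eval₂_reverse_eq_zero_iff] at hp

theorem stmt7 (R : Type*) [CommRing R] [IsDomain R] (h1 : IsSQQR R)
    (h2 : ¬ IsIntegrallyClosed R) (x : FractionRing R)
    (hx : x ∈ integralClosure R (FractionRing R)) (hxR : x ∉ imageR R (FractionRing R)) :
    (⋃ P ∈ {P : Ideal R | P.IsPrime ∧ ¬ condIdeal R (FractionRing R) {x} ≤ P}, (P : Set R)) =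
      {r : R | ¬ IsUnit r} := by
  have hinj : Function.Injective (algebraMap R (FractionRing R)) :=
    IsFractionRing.injective R (FractionRing R)
  ext r
  simp only [Set.mem_iUnion, Set.mem_setOf_eq, SetLike.mem_coe, exists_prop]
  constructor
  · rintro ⟨P, ⟨hP, -⟩, hrP⟩ hunit
    exact hP.ne_top (Ideal.eq_top_of_isUnit_mem P hrP hunit)
  · intro hr
    obtain ⟨b, b', hb'⟩ := IsLocalization.exists_integer_multiple (nonZeroDivisors R) x
    have hbI : (b : R) ∈ condIdeal R (FractionRing R) {x} := by
      intro u hu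
      rw [Set.mem_singleton_iff] at hu
      exact ⟨b', by rw [hu, hb', Algebra.smul_def]⟩
    have hb0 : (b : R) ≠ 0 := nonZeroDivisors.coe_ne_zero b
    rcases eq_or_ne r 0 with rfl | hr0
    · exact ⟨⊥, ⟨Ideal.bot_prime, fun hle => hb0 (hle hbI)⟩, Ideal.zero_mem ⊥⟩
    by_contra hcon
    push_neg at hcon
    obtain ⟨Ps, hPsprime, hadj⟩ := h1 x
    have hrι : algebraMap R (FractionRing R) r ≠ 0 := fun h =>
      hr0 (hinj (h.trans (map_zero _).symm))
    have claim1 : ∀ P ∈ Ps, ¬ condIdeal R (FractionRing R) {x} ≤ P := by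
      intro P hP hle
      have hxmem : x ∈ (↑(Algebra.adjoin R {x} : Subalgebra R (FractionRing R)) :
          Set (FractionRing R)) := Algebra.self_mem_adjoin_singleton R x
      rw [hadj] at hxmem
      obtain ⟨s, hsP, r', hsr'⟩ := Set.mem_iInter₂.mp hxmem P hP
      refine hsP (hle ?_)
      intro u hu
      rw [Set.mem_singleton_iff] at hu
      exact ⟨r', by rw [hu, mul_comm]; exact hsr'⟩
    have claim2 : (algebraMap R (FractionRing R) r)⁻¹ ∈
        (↑(Algebra.adjoin R {x} : Subalgebra R (FractionRing R)) : Set (FractionRing R)) := by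
      rw [hadj]
      refine Set.mem_iInter₂.mpr fun P hP => ?_
      have hrP : r ∉ P := fun hmem => hcon P ⟨hPsprime P hP, claim1 P hP⟩ hmem
      exact ⟨r, hrP, 1, by rw [inv_mul_cancel₀ hrι, map_one]⟩
    have hint : IsIntegral R ((algebraMap R (FractionRing R) r)⁻¹) := by
      have hle : Algebra.adjoin R {x} ≤ integralClosure R (FractionRing R) :=
        Algebra.adjoin_le (Set.singleton_subset_iff.mpr hx)
      exact hle claim2
    exact hr (isUnit_of_inv_isIntegral hrι hint)

end
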